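/- Assume the Continuum Hypothesis (2^{ℵ₀} = ℵ₁). Then there exist a set X ⊆ ℝ satisfying S1(Ω,Γ) and a countable subset Q ⊆ X such that X ∖ Q does not satisfy Ufin(O,O) (the Menger property). In particular, none of the properties between S1(Ω,Γ) and Ufin(O,O) is hereditary. -/

import Mathlib

open Filter Set

/-- `f ≤* g`: `f n ≤ g n` for all but finitely many `n`. -/
def LeStar (f g : ℕ → ℕ) : Prop := ∀ᶠ n in Filter.atTop, f n ≤ g n

/-- A subset of Baire space is bounded if it has a `≤*`-upper bound. -/
def BddFam (B : Set (ℕ → ℕ)) : Prop := ∃ g : ℕ → ℕ, ∀ f ∈ B, LeStar f g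

/-- A subset of Baire space is dominating if every function is `≤*` below some member. -/
def DominatingFam (D : Set (ℕ → ℕ)) : Prop := ∀ g : ℕ → ℕ, ∃ f ∈ D, LeStar g f

/-- An open cover of a topological space. -/
def IsOpenCover {X : Type*} [TopologicalSpace X] (𝒰 : Set (Set X)) : Prop :=
  (∀ U ∈ 𝒰, IsOpen U) ∧ ⋃₀ 𝒰 = Set.univ

/-- The cover `𝒰` contains a finite subcover. -/
def HasFinSubcover {X : Type*} (𝒰 : Set (Set X)) : Prop :=
  ∃ ℱ ⊆ 𝒰, ℱ.Finite ∧ ⋃₀ ℱ = Set.univ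

/-- The Hurewicz property `Ufin(O,Γ)`. -/
def UfinOGamma (X : Type*) [TopologicalSpace X] : Prop :=
  ∀ 𝒰 : ℕ → Set (Set X),
    (∀ n, IsOpenCover (𝒰 n)) → (∀ n, ¬ HasFinSubcover (𝒰 n)) →
    ∃ ℱ : ℕ → Set (Set X),
      (∀ n, ℱ n ⊆ 𝒰 n ∧ (ℱ n).Finite) ∧
      ∀ x : X, ∀ᶠ n in Filter.atTop, x ∈ ⋃₀ ℱ n

/-- An `ω`-cover: no single member covers the whole space, but every finite set is
contained in some member. -/
def IsOmegaCover {X : Type*} (𝒰 : Set (Set X)) : Prop :=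
  ⋃₀ 𝒰 = Set.univ ∧ (∀ U ∈ 𝒰, U ≠ Set.univ) ∧
    ∀ F : Set X, F.Finite → ∃ U ∈ 𝒰, F ⊆ U

/-- A `γ`-cover: an infinite cover such that every point belongs to all but finitely many
members. -/
def IsGammaCover {X : Type*} (𝒰 : Set (Set X)) : Prop :=
  𝒰.Infinite ∧ ⋃₀ 𝒰 = Set.univ ∧ ∀ x : X, {U ∈ 𝒰 | x ∉ U}.Finite

/-- An open `ω`-cover. -/
def IsOpenOmegaCover {X : Type*} [TopologicalSpace X] (𝒰 : Set (Set X)) : Prop :=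
  (∀ U ∈ 𝒰, IsOpen U) ∧ IsOmegaCover 𝒰

/-- The Gerlits–Nagy property `S1(Ω,Γ)`. -/
def S1OmegaGamma (X : Type*) [TopologicalSpace X] : Prop :=
  ∀ 𝒰 : ℕ → Set (Set X), (∀ n, IsOpenOmegaCover (𝒰 n)) →
    ∃ U : ℕ → Set X, (∀ n, U n ∈ 𝒰 n) ∧ IsGammaCover (Set.range U)

/-- The Menger property `Ufin(O,O)`. -/
def UfinOO (X : Type*) [TopologicalSpace X] : Prop :=
  ∀ 𝒰 : ℕ → Set (Set X),
    (∀ n, IsOpenCover (𝒰 n)) → (∀ n, ¬ HasFinSubcover (𝒰 n)) →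
    ∃ ℱ : ℕ → Set (Set X),
      (∀ n, ℱ n ⊆ 𝒰 n ∧ (ℱ n).Finite) ∧
      (⋃ n, ⋃₀ ℱ n) = Set.univ


open Filter Set

noncomputable section GammaAux
open scoped Classical

abbrev CB := ℕ → Bool

def xset (x : CB) : Set ℕ := {n | x n = true}

def FinSupp : Set CB := {x | (xset x).Finite}

def substar (x y : CB) : Prop := (xset x \ xset y).Finite

def Determined (C : Set CB) (m : ℕ) : Prop :=
  ∀ x y : CB, (∀ k < m, x k = y k) → (x ∈ C ↔ y ∈ C)

def BasicNE : Set (Set CB) := {C | (∃ m, Determined C m) ∧ C ≠ Set.univ}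

lemma substar_refl (x : CB) : substar x x := by simp [substar]

lemma substar_of_subset {x y z : CB} (h : xset x ⊆ xset y) (h2 : substar y z) : substar x z :=
  h2.subset (diff_subset_diff_left h)

lemma substar_trans {x y z : CB} (h1 : substar x y) (h2 : substar y z) : substar x z := by
  refine (h1.union h2).subset ?_
  intro n hn
  by_cases hy : n ∈ xset y
  · exact Or.inr ⟨hy, hn.2⟩
  · exact Or.inl ⟨hn.1, hy⟩

/-- restriction map -/
def resm (m : ℕ) (x : CB) : Fin m → Bool := fun i => x i

lemma resm_continuous (m : ℕ) : Continuous (resm m) :=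
  continuous_pi fun i => continuous_apply _

lemma determined_eq {C : Set CB} {m : ℕ} (h : Determined C m) :
    C = resm m ⁻¹' (resm m '' C) := by
  ext x
  constructor
  · exact fun hx => ⟨x, hx, rfl⟩
  · rintro ⟨y, hy, hxy⟩
    refine (h y x ?_).1 hy
    intro k hk
    have := congrFun hxy ⟨k, hk⟩
    exact this
 
lemma determined_isOpen {C : Set CB} {m : ℕ} (h : Determined C m) : IsOpen C := by
  rw [determined_eq h]
  exact (isOpen_discrete _).preimage (resm_continuous m)

lemma basicNE_countable : BasicNE.Countable := by
  have hsub : BasicNE ⊆ ⋃ m : ℕ, Set.range (fun S : Set (Fin m → Bool) => resm m ⁻¹' S) := by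
    rintro C ⟨⟨m, hm⟩, -⟩
    exact mem_iUnion.2 ⟨m, ⟨resm m '' C, (determined_eq hm).symm⟩⟩
  exact (Set.countable_iUnion fun m => Set.countable_range _).mono hsub

lemma finSupp_countable : FinSupp.Countable := by
  have hsub : FinSupp ⊆ Set.range (fun s : Finset ℕ => (fun n => decide (n ∈ s) : CB)) := by
    intro x hx
    refine ⟨hx.toFinset, ?_⟩
    funext n
    by_cases h : x n = true
    · simp [Set.Finite.mem_toFinset, xset, h]
    · simp only [Bool.not_eq_true] at h
      simp [Set.Finite.mem_toFinset, xset, h]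
  exact (Set.countable_range _).mono hsub

lemma finSupp_mem {x : CB} (h : (xset x).Finite) : x ∈ FinSupp := h

lemma supp_finite (G : Finset ℕ) : {x : CB | ∀ n, x n = true → n ∈ G}.Finite := by
  have hsub : {x : CB | ∀ n, x n = true → n ∈ G} ⊆
      Set.range (fun f : (↥(G : Set ℕ) → Bool) => (fun n => if h : n ∈ G then f ⟨n, h⟩ else false : CB)) := by
    intro x hx
    refine ⟨fun i => x i.1, ?_⟩
    funext n
    by_cases h : n ∈ G
    · simp [h]
    · simp only [h, dif_neg, not_false_iff]
      by_cases hx' : x n = true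
      · exact absurd (hx n hx') h
      · simp only [Bool.not_eq_true] at hx'; exact hx'.symm
  exact (Set.finite_range _).subset hsub

lemma cb_infinite : Infinite CB :=
  Infinite.of_injective (fun k : ℕ => (fun n => decide (n = k) : CB)) (by
    intro a b h
    have := congrFun h a
    simpa using this)

/-- a cylinder neighbourhood inside an open set -/
lemma exists_determined_nbhd {W : Set CB} (hW : IsOpen W) {x : CB} (hx : x ∈ W) :
    ∃ m : ℕ, ∀ y : CB, (∀ k < m, y k = x k) → y ∈ W := by
  rcases (isOpen_pi_iff.1 hW) x hx with ⟨I, u, hu, hsub⟩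
  refine ⟨I.sup id + 1, fun y hy => hsub ?_⟩
  intro a ha
  have : a < I.sup id + 1 := Nat.lt_succ_of_le (Finset.le_sup (f := id) ha)
  rw [hy a this]
  exact (hu a ha).2

/-- truncation of a function below m -/
lemma exists_finsupp_not_mem {C : Set CB} (hC : C ∈ BasicNE) :
    ∃ z ∈ FinSupp, z ∉ C := by
  obtain ⟨⟨m, hm⟩, hne⟩ := hC
  obtain ⟨w, hw⟩ : ∃ w : CB, w ∉ C := by
    by_contra h
    push_neg at h
    exact hne (Set.eq_univ_of_forall h)
  refine ⟨fun n => if n < m then w n else false, ?_, ?_⟩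
  · exact (Set.finite_Iio m).subset (by
      intro n hn
      simp only [xset, mem_setOf_eq] at hn
      by_contra h
      simp only [Set.mem_Iio, not_lt] at h
      rw [if_neg (not_lt.2 h)] at hn
      exact absurd hn (by simp))
  · intro h
    exact hw ((hm _ w (fun k hk => by simp [if_pos hk])).1 h)

/-- in an ω-cover of `A ⊇ FinSupp` by nontrivial basic sets, infinitely many members
contain any given finite subset of `A`. -/
lemma cover_mem_infinite {A : Set CB} (hFin : FinSupp ⊆ A) {𝒰 : Set (Set CB)}
    (hB : 𝒰 ⊆ BasicNE)
    (hcov : ∀ F : Set CB, F.Finite → F ⊆ A → ∃ C ∈ 𝒰, F ⊆ C)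
    {F : Set CB} (hF : F.Finite) (hFA : F ⊆ A) :
    {C | C ∈ 𝒰 ∧ F ⊆ C}.Infinite := by
  by_contra hfin
  rw [Set.not_infinite] at hfin
  set R := {C | C ∈ 𝒰 ∧ F ⊆ C} with hR
  have hz : ∀ C ∈ R, ∃ z ∈ FinSupp, z ∉ C := fun C hC => exists_finsupp_not_mem (hB hC.1)
  set zf := fun C => if h : C ∈ R then (hz C h).choose else (fun _ => false : CB) with hzf
  have hzf1 : ∀ C ∈ R, zf C ∈ FinSupp ∧ zf C ∉ C := by
    intro C hC
    rw [hzf]; simp only [dif_pos hC]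
    exact ⟨(hz C hC).choose_spec.1, (hz C hC).choose_spec.2⟩
  have hF' : (F ∪ zf '' R).Finite := hF.union (hfin.image _)
  have hFA' : F ∪ zf '' R ⊆ A := by
    rintro x (hx | ⟨C, hC, rfl⟩)
    · exact hFA hx
    · exact hFin (hzf1 C hC).1
  obtain ⟨C, hC𝒰, hCF⟩ := hcov _ hF' hFA'
  have hCR : C ∈ R := ⟨hC𝒰, fun x hx => hCF (Or.inl hx)⟩
  exact (hzf1 C hCR).2 (hCF (Or.inr ⟨C, hCR, rfl⟩))

/-- `BasicNE` itself ω-covers everything. -/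
lemma basicNE_cover {F : Set CB} (hF : F.Finite) : ∃ C ∈ BasicNE, F ⊆ C := by
  have : Infinite CB := cb_infinite
  obtain ⟨z, hz⟩ : ∃ z : CB, z ∉ F := by
    rcases (hF.infinite_compl).nonempty with ⟨z, hz⟩
    exact ⟨z, hz⟩
  obtain ⟨m, hm⟩ : ∃ m : ℕ, ∀ f ∈ F, ∃ k < m, z k ≠ f k := by
    refine Set.Finite.induction_on (motive := fun F _ => z ∉ F → ∃ m : ℕ, ∀ f ∈ F, ∃ k < m, z k ≠ f k)
      F hF (fun _ => ⟨0, by simp⟩) ?_ hz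
    intro f s hfs hsf IH hzs
    obtain ⟨m, hm⟩ := IH (fun h => hzs (Set.mem_insert_iff.2 (Or.inr h)))
    have hzf : z ≠ f := fun h => hzs (h ▸ Set.mem_insert f s)
    obtain ⟨k₀, hk₀⟩ : ∃ k, z k ≠ f k := by
      by_contra h
      push_neg at h
      exact hzf (funext h)
    refine ⟨max m (k₀ + 1), ?_⟩
    rintro g (rfl | hg)
    · exact ⟨k₀, lt_of_lt_of_le (Nat.lt_succ_self _) (le_max_right _ _), hk₀⟩
    · obtain ⟨k, hk, hk'⟩ := hm g hg
      exact ⟨k, lt_of_lt_of_le hk (le_max_left _ _), hk'⟩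
  refine ⟨{y | ∃ f ∈ F, ∀ k < m, y k = f k}, ⟨⟨m, ?_⟩, ?_⟩, ?_⟩
  · intro x y hxy
    constructor
    · rintro ⟨f, hf, hh⟩; exact ⟨f, hf, fun k hk => (hxy k hk).symm.trans (hh k hk)⟩
    · rintro ⟨f, hf, hh⟩; exact ⟨f, hf, fun k hk => (hxy k hk).trans (hh k hk)⟩
  · intro h
    have hzC : z ∈ {y | ∃ f ∈ F, ∀ k < m, y k = f k} := h ▸ Set.mem_univ z
    obtain ⟨f, hf, hh⟩ := hzC
    obtain ⟨k, hk, hk'⟩ := hm f hf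
    exact hk' (hh k hk)
  · intro f hf
    exact ⟨f, hf, fun k _ => rfl⟩

lemma infinite_exists_ge {s : Set ℕ} (hs : s.Infinite) (B : ℕ) : ∃ n ∈ s, B ≤ n := by
  obtain ⟨n, hn, hn'⟩ := hs.exists_gt B
  exact ⟨n, hn, hn'.le⟩

/-- pseudo-intersection of a countable ⊆*-chain -/
lemma pseudo {ι : Type*} [Countable ι] (t : ι → CB)
    (hinf : ∀ i, (xset (t i)).Infinite)
    (hch : ∀ i j, substar (t i) (t j) ∨ substar (t j) (t i)) :
    ∃ a : CB, (xset a).Infinite ∧ ∀ i, substar a (t i) := by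
  rcases isEmpty_or_nonempty ι with h | h
  · exact ⟨fun _ => true, by simp [xset, Set.infinite_univ], fun i => (h.elim i)⟩
  obtain ⟨e, he⟩ := exists_surjective_nat ι
  have hmin : ∀ n : ℕ, ∃ m₀ ≤ n, ∀ m ≤ n, substar (t (e m₀)) (t (e m)) := by
    intro n
    induction n with
    | zero => exact ⟨0, le_rfl, by
        intro m hm
        rw [Nat.le_zero.1 hm]
        exact substar_refl _⟩
    | succ n IH =>
      obtain ⟨m₀, hm₀, hsub⟩ := IH
      rcases hch (e m₀) (e (n+1)) with h | h
      · refine ⟨m₀, hm₀.trans (Nat.le_succ n), fun m hm => ?_⟩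
        rcases eq_or_lt_of_le hm with hm' | hm'
        · rw [hm']; exact h
        · exact hsub m (Nat.lt_succ_iff.1 hm')
      · refine ⟨n+1, le_rfl, fun m hm => ?_⟩
        rcases eq_or_lt_of_le hm with hm' | hm'
        · rw [hm']; exact substar_refl _
        · exact substar_trans h (hsub m (Nat.lt_succ_iff.1 hm'))
  have hIcap : ∀ n : ℕ, (⋂ m ∈ Finset.range (n+1), xset (t (e m))).Infinite := by
    intro n
    obtain ⟨m₀, hm₀, hsub⟩ := hmin n
    have hB : (⋃ m ∈ Finset.range (n+1), (xset (t (e m₀)) \ xset (t (e m)))).Finite :=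
      Set.Finite.biUnion (Finset.finite_toSet _) (fun m hm =>
        hsub m (Nat.lt_succ_iff.1 (Finset.mem_range.1 hm)))
    refine ((hinf (e m₀)).diff hB).mono ?_
    intro k hk
    simp only [Set.mem_iInter]
    intro m hm
    by_contra hkm
    exact hk.2 (Set.mem_biUnion hm ⟨hk.1, hkm⟩)
  -- recursive strictly increasing selection
  have hstep : ∀ (n : ℕ) (prev : ℕ), ∃ k, k ∈ (⋂ m ∈ Finset.range (n+1), xset (t (e m))) ∧ prev < k :=
    fun n prev => (hIcap n).exists_gt prev
  set kf : ℕ → ℕ := fun n => Nat.rec ((hstep 0 0).choose) (fun n ih => (hstep (n+1) ih).choose) n with hkf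
  have hkf0 : kf 0 ∈ (⋂ m ∈ Finset.range 1, xset (t (e m))) := (hstep 0 0).choose_spec.1
  have hkfs : ∀ n, kf (n+1) ∈ (⋂ m ∈ Finset.range (n+2), xset (t (e m))) ∧ kf n < kf (n+1) :=
    fun n => (hstep (n+1) (kf n)).choose_spec
  have hkmem : ∀ n, kf n ∈ (⋂ m ∈ Finset.range (n+1), xset (t (e m))) := by
    intro n
    cases n with
    | zero => exact hkf0
    | succ n => exact (hkfs n).1
  have hkmono : StrictMono kf := strictMono_nat_of_lt_succ (fun n => (hkfs n).2)
  refine ⟨fun n => decide (n ∈ Set.range kf), ?_, ?_⟩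
  · have : xset (fun n => decide (n ∈ Set.range kf)) = Set.range kf := by
      ext n; simp [xset]
    rw [this]
    exact Set.infinite_range_of_injective hkmono.injective
  · intro i
    obtain ⟨m, rfl⟩ := he i
    have : xset (fun n => decide (n ∈ Set.range kf)) \ xset (t (e m)) ⊆ kf '' (Set.Iio m) := by
      intro n hn
      have hn1 : n ∈ Set.range kf := by
        have := hn.1
        simpa [xset] using this
      obtain ⟨j, rfl⟩ := hn1
      refine ⟨j, ?_, rfl⟩
      by_contra hj
      simp only [Set.mem_Iio, not_lt] at hj
      have : kf j ∈ xset (t (e m)) := by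
        have := hkmem j
        simp only [Set.mem_iInter] at this
        exact this m (Finset.mem_range.2 (Nat.lt_succ_of_le hj))
      exact hn.2 this
    exact ((Set.finite_Iio m).image kf).subset this

section Key

/-- finite index set used at step `k`. -/
def GsetS (m : ℕ → ℕ) (k : ℕ) : Finset ℕ :=
  ((Finset.range k).image m) ∪ Finset.range k

/-- finite subset of `A` that the `k`-th chosen set must contain -/
def FcandS (enumA : ℕ → CB) (m : ℕ → ℕ) (k : ℕ) : Set CB :=
  {y : CB | ∀ n, y n = true → n ∈ GsetS m k} ∪ enumA '' (Set.Iic k)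

lemma FcandS_finite (enumA : ℕ → CB) (m : ℕ → ℕ) (k : ℕ) : (FcandS enumA m k).Finite :=
  (supp_finite _).union ((Set.finite_Iic k).image _)

lemma FcandS_subset {enumA : ℕ → CB} (hFin : FinSupp ⊆ Set.range enumA) (m : ℕ → ℕ) (k : ℕ) :
    FcandS enumA m k ⊆ Set.range enumA := by
  rintro y (hy | ⟨i, _, rfl⟩)
  · exact hFin ((Finset.finite_toSet _).subset (fun n hn => hy n hn))
  · exact ⟨i, rfl⟩

def StepGood (𝒰 : ℕ → Set (Set CB)) (enumA : ℕ → CB) (a : CB) (g : ℕ → ℕ)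
    (h : ℕ → ℕ × ℕ × Set CB) (k : ℕ) (s : ℕ × ℕ × Set CB) : Prop :=
  s.2.2 ∈ 𝒰 k ∧ FcandS enumA (fun t => (h t).1) k ⊆ s.2.2 ∧ Determined s.2.2 s.2.1 ∧
  (∀ t < k, s.2.2 ≠ (h t).2.2) ∧ (∀ t < k, (h t).1 < s.1) ∧
  (∀ t < k, (h t).2.1 ≤ s.1) ∧ s.2.1 ≤ s.1 ∧ g k ≤ s.1 ∧ s.1 ∈ xset a

lemma keyLemma (𝒰 : ℕ → Set (Set CB)) (hB : ∀ j, 𝒰 j ⊆ BasicNE)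
    (enumA : ℕ → CB) (hFin : FinSupp ⊆ Set.range enumA)
    (hcov : ∀ j (F : Set CB), F.Finite → F ⊆ Set.range enumA → ∃ C ∈ 𝒰 j, F ⊆ C)
    (a : CB) (ha : (xset a).Infinite) (g : ℕ → ℕ) :
    ∃ (b : CB) (m : ℕ → ℕ) (V : ℕ → Set CB),
      StrictMono m ∧ (∀ k, g k ≤ m k) ∧ (∀ k, m k ∈ xset a) ∧ xset b = Set.range m ∧
      (∀ j, V j ∈ 𝒰 j) ∧ Function.Injective V ∧
      (∀ x, x ∈ Set.range enumA → ∀ᶠ j in atTop, x ∈ V j) ∧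
      (∀ x : CB, substar x b → ∀ᶠ j in atTop, x ∈ V j) := by
  classical
  have pickEx : ∀ (h : ℕ → ℕ × ℕ × Set CB) (k : ℕ), ∃ s, StepGood 𝒰 enumA a g h k s := by
    intro h k
    have hinf := cover_mem_infinite hFin (hB k) (hcov k)
      (FcandS_finite enumA (fun t => (h t).1) k) (FcandS_subset hFin _ k)
    obtain ⟨C, ⟨hC𝒰, hCF⟩, hCnew⟩ :=
      (hinf.diff (((Set.finite_Iio k).image (fun t => (h t).2.2)))).nonempty
    obtain ⟨M, hM⟩ := (hB k hC𝒰).1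
    set B := (((Finset.range k).image fun t => (h t).1).sup id) +
      (((Finset.range k).image fun t => (h t).2.1).sup id) + M + g k + 1 with hBdef
    obtain ⟨m, hma, hmB⟩ := infinite_exists_ge ha B
    refine ⟨(m, M, C), hC𝒰, hCF, hM, ?_, ?_, ?_, ?_, ?_, hma⟩
    · intro t ht hEq
      exact hCnew ⟨t, ht, hEq.symm⟩
    · intro t ht
      have h1 : (h t).1 ≤ ((Finset.range k).image fun t => (h t).1).sup id :=
        Finset.le_sup (f := id) (Finset.mem_image_of_mem _ (Finset.mem_range.2 ht))
      omega
    · intro t ht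
      have h1 : (h t).2.1 ≤ ((Finset.range k).image fun t => (h t).2.1).sup id :=
        Finset.le_sup (f := id) (Finset.mem_image_of_mem _ (Finset.mem_range.2 ht))
      omega
    · exact (show M ≤ m by omega)
    · exact (show g k ≤ m by omega)
  set pick := fun (h : ℕ → ℕ × ℕ × Set CB) k => (pickEx h k).choose with hpick
  have pickSpec : ∀ h k, StepGood 𝒰 enumA a g h k (pick h k) := fun h k => (pickEx h k).choose_spec
  let hist : ℕ → ℕ → ℕ × ℕ × Set CB := fun k =>
    Nat.rec (fun _ => (0, 0, (∅ : Set CB))) (fun k ih => Function.update ih k (pick ih k)) k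
  have hist_succ : ∀ k, hist (k+1) = Function.update (hist k) k (pick (hist k) k) := fun _ => rfl
  set seq := fun k => pick (hist k) k with hseq
  have hist_eq : ∀ k j, j < k → hist k j = seq j := by
    intro k
    induction k with
    | zero => intro j hj; omega
    | succ k IH =>
      intro j hj
      rw [hist_succ]
      rcases Nat.lt_succ_iff_lt_or_eq.1 hj with hj' | hj'
      · rw [Function.update_of_ne (by omega), IH j hj']
      · subst hj'; rw [Function.update_self]
  have seqGood : ∀ k, StepGood 𝒰 enumA a g (hist k) k (seq k) := fun k => pickSpec (hist k) k
  set mfun := fun k => (seq k).1 with hmfun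
  set Mfun := fun k => (seq k).2.1 with hMfun
  set Vfun := fun k => (seq k).2.2 with hVfun
  have hFeq : ∀ k, FcandS enumA (fun t => (hist k t).1) k = FcandS enumA mfun k := by
    intro k
    have hG : GsetS (fun t => (hist k t).1) k = GsetS mfun k := by
      unfold GsetS
      congr 1
      apply Finset.image_congr
      intro u hu
      show (hist k u).1 = mfun u
      rw [hist_eq k u (Finset.mem_range.1 (Finset.mem_coe.1 hu))]
    unfold FcandS
    rw [hG]
  have hVmem : ∀ k, Vfun k ∈ 𝒰 k := fun k => (seqGood k).1
  have hFsub : ∀ k, FcandS enumA mfun k ⊆ Vfun k := fun k => (hFeq k) ▸ (seqGood k).2.1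
  have hDet : ∀ k, Determined (Vfun k) (Mfun k) := fun k => (seqGood k).2.2.1
  have hVne : ∀ t k, t < k → Vfun k ≠ Vfun t := by
    intro t k htk
    have := (seqGood k).2.2.2.1 t htk
    rwa [hist_eq k t htk] at this
  have hmlt : ∀ t k, t < k → mfun t < mfun k := by
    intro t k htk
    have := (seqGood k).2.2.2.2.1 t htk
    rwa [hist_eq k t htk] at this
  have hMle : ∀ t k, t ≤ k → Mfun t ≤ mfun k := by
    intro t k htk
    rcases eq_or_lt_of_le htk with rfl | h
    · exact (seqGood t).2.2.2.2.2.2.1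
    · have := (seqGood k).2.2.2.2.2.1 t h
      rwa [hist_eq k t h] at this
  have hgle : ∀ k, g k ≤ mfun k := fun k => (seqGood k).2.2.2.2.2.2.2.1
  have hain : ∀ k, mfun k ∈ xset a := fun k => (seqGood k).2.2.2.2.2.2.2.2
  have hmono : StrictMono mfun := fun t k h => hmlt t k h
  have hVinj : Function.Injective Vfun := by
    intro j k hjk
    rcases lt_trichotomy j k with h | h | h
    · exact absurd hjk.symm (hVne j k h)
    · exact h
    · exact absurd hjk (hVne k j h)
  refine ⟨fun n => decide (n ∈ Set.range mfun), mfun, Vfun, hmono, hgle, hain, ?_, hVmem, hVinj, ?_, ?_⟩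
  · ext n; simp [xset]
  · rintro x ⟨i, rfl⟩
    filter_upwards [eventually_ge_atTop i] with j hj
    exact hFsub j (Or.inr ⟨i, Set.mem_Iic.2 hj, rfl⟩)
  · intro x hx
    have hxb : xset (fun n => decide (n ∈ Set.range mfun)) = Set.range mfun := by
      ext n; simp [xset]
    rw [substar, hxb] at hx
    obtain ⟨N₀, hN₀⟩ := hx.bddAbove
    filter_upwards [eventually_ge_atTop (N₀ + 1)] with j hj
    set y : CB := fun n => if n < Mfun j then x n else false with hy
    have hagree : ∀ k < Mfun j, y k = x k := fun k hk => by rw [hy]; simp [if_pos hk]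
    refine (hDet j y x hagree).1 ?_
    refine hFsub j (Or.inl ?_)
    intro n hn
    simp only [hy] at hn
    by_cases hnM : n < Mfun j
    · rw [if_pos hnM] at hn
      by_cases hnb : n ∈ Set.range mfun
      · obtain ⟨t, rfl⟩ := hnb
        have htj : t < j := by
          by_contra hc
          push_neg at hc
          have h1 : mfun j ≤ mfun t := hmono.monotone hc
          have h2 : Mfun j ≤ mfun j := hMle j j le_rfl
          omega
        exact Finset.mem_union_left _ (Finset.mem_image_of_mem _ (Finset.mem_range.2 htj))
      · have hnd : n ∈ xset x \ Set.range mfun := ⟨hn, hnb⟩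
        have : n ≤ N₀ := hN₀ hnd
        exact Finset.mem_union_right _ (Finset.mem_range.2 (by omega))
    · rw [if_neg hnM] at hn
      exact absurd hn (by simp)

end Key

section Tower
open Cardinal

lemma hch_zero (hCH : (2 : Cardinal) ^ Cardinal.aleph0 = Cardinal.aleph 1) :
    (2 : Cardinal.{0}) ^ Cardinal.aleph0 = Cardinal.aleph 1 := by
  apply Cardinal.lift_injective
  rw [Cardinal.lift_power, Cardinal.lift_two, Cardinal.lift_aleph0, Cardinal.lift_aleph]
  simpa using hCH

abbrev kappa : Type := (Cardinal.aleph 1 : Cardinal.{0}).ord.ToType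

lemma kappa_mk : #kappa = Cardinal.aleph 1 := Cardinal.mk_ord_toType _

instance kappa_nonempty : Nonempty kappa := by
  rw [← Cardinal.mk_ne_zero_iff, kappa_mk]
  exact ne_of_gt (lt_trans Cardinal.aleph0_pos Cardinal.aleph0_lt_aleph_one)

lemma kappa_initial_countable (i : kappa) : Countable {j : kappa // j < i} := by
  haveI inst : IsWellOrder kappa (· < ·) := isWellOrder_lt
  have h : Cardinal.ord #kappa = @Ordinal.type kappa (· < ·) inst := by
    rw [kappa_mk]
    exact (Ordinal.type_toType _).symm
  have h2 := @Cardinal.card_typein_lt kappa (· < ·) inst i h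
  have h2' : #{j : kappa // j < i} < Cardinal.aleph 1 := by
    rw [kappa_mk] at h2
    exact (Ordinal.card_typein i).trans_lt h2
  have h3 : ({j : kappa | j < i}).Countable := by
    rw [Cardinal.countable_iff_lt_aleph_one]
    exact h2'
  exact h3.to_subtype

lemma surj_of_le {α : Type} [Nonempty α] (h : #α ≤ #kappa) : ∃ f : kappa → α, Function.Surjective f := by
  obtain ⟨emb⟩ := (Cardinal.le_def _ _).1 h
  exact ⟨Function.invFun emb, Function.invFun_surjective emb.injective⟩

lemma exists_surj_g (hCH : (2 : Cardinal.{0}) ^ Cardinal.aleph0 = Cardinal.aleph 1) :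
    ∃ gg : kappa → (ℕ → ℕ), Function.Surjective gg := by
  apply surj_of_le
  rw [kappa_mk, ← hCH]
  have h1 : #(ℕ → ℕ) = Cardinal.aleph0 ^ Cardinal.aleph0 := by
    rw [← Cardinal.mk_nat, Cardinal.power_def]
  rw [h1, Cardinal.power_self_eq le_rfl]

lemma exists_surj_S (hCH : (2 : Cardinal.{0}) ^ Cardinal.aleph0 = Cardinal.aleph 1) :
    ∃ S : kappa → (ℕ → Set (Set CB)),
      ∀ u : ℕ → Set (Set CB), (∀ j, u j ⊆ BasicNE) → ∃ i, S i = u := by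
  have hBc : Countable ↥BasicNE := basicNE_countable.to_subtype
  obtain ⟨S₀, hS₀⟩ : ∃ f : kappa → (ℕ → Set ↥BasicNE), Function.Surjective f := by
    apply surj_of_le
    rw [kappa_mk, ← hCH]
    have h0 : #(ℕ → Set ↥BasicNE) = #(Set ↥BasicNE) ^ (Cardinal.aleph0 : Cardinal.{0}) := by
      rw [← Cardinal.mk_nat, Cardinal.power_def]
    rw [h0]
    have h1 : #(Set ↥BasicNE) ≤ 2 ^ Cardinal.aleph0 := by
      rw [Cardinal.mk_set]
      exact Cardinal.power_le_power_left (by norm_num) (Cardinal.mk_le_aleph0)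
    calc #(Set ↥BasicNE) ^ (Cardinal.aleph0 : Cardinal.{0})
        ≤ (2 ^ Cardinal.aleph0) ^ Cardinal.aleph0 := Cardinal.power_le_power_right h1
      _ = 2 ^ (Cardinal.aleph0 * Cardinal.aleph0) := by rw [← Cardinal.power_mul]
      _ = 2 ^ Cardinal.aleph0 := by rw [Cardinal.aleph0_mul_aleph0]
  refine ⟨fun i j => Subtype.val '' (S₀ i j), ?_⟩
  intro u hu
  obtain ⟨i, hi⟩ := hS₀ (fun j => {C : ↥BasicNE | (C : Set CB) ∈ u j})
  refine ⟨i, ?_⟩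
  funext j
  show Subtype.val '' (S₀ i j) = u j
  rw [show S₀ i j = {C : ↥BasicNE | (C : Set CB) ∈ u j} from congrFun hi j]
  ext C
  constructor
  · rintro ⟨D, hD, rfl⟩; exact hD
  · intro hC; exact ⟨⟨C, hu j hC⟩, hC, rfl⟩

/-- the set of previously chosen elements, together with all finite-support points -/
def AsetOf (i : kappa) (prev : ∀ j : kappa, j < i → CB) : Set CB :=
  FinSupp ∪ {x | ∃ (j : kappa) (hj : j < i), prev j hj = x}

def Suitable (u : ℕ → Set (Set CB)) (A : Set CB) : Prop :=
  (∀ j, u j ⊆ BasicNE) ∧ ∀ (j : ℕ) (F : Set CB), F.Finite → F ⊆ A → ∃ C ∈ u j, F ⊆ C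

variable (S : kappa → ℕ → Set (Set CB)) (gg : kappa → ℕ → ℕ)

def HypOf (i : kappa) (prev : ∀ j : kappa, j < i → CB) : Prop :=
  (∀ (j : kappa) (hj : j < i), (xset (prev j hj)).Infinite) ∧
  (∀ (j k : kappa) (hj : j < i) (hk : k < i), j < k → substar (prev k hk) (prev j hj))

def GoodOf (i : kappa) (prev : ∀ j : kappa, j < i → CB) (x : CB) : Prop :=
  (xset x).Infinite ∧
  (∀ (j : kappa) (hj : j < i), substar x (prev j hj)) ∧
  (∃ m : ℕ → ℕ, StrictMono m ∧ xset x = Set.range m ∧ ∀ k, gg i k ≤ m k) ∧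
  (Suitable (S i) (AsetOf i prev) → ∃ V : ℕ → Set CB,
    (∀ j, V j ∈ S i j) ∧ Function.Injective V ∧
    ∀ y : CB, (y ∈ AsetOf i prev ∨ substar y x) → ∀ᶠ j in atTop, y ∈ V j)

lemma stageEx (i : kappa) (prev : ∀ j : kappa, j < i → CB) :
    ∃ x : CB, HypOf i prev → GoodOf S gg i prev x := by
  classical
  by_cases hH : HypOf i prev
  swap
  · exact ⟨fun _ => false, fun h => absurd h hH⟩
  -- pseudo-intersection
  have : Countable {j : kappa // j < i} := kappa_initial_countable i
  obtain ⟨a, ha, hsub⟩ := pseudo (fun p : {j : kappa // j < i} => prev p.1 p.2)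
    (fun p => hH.1 p.1 p.2)
    (by
      rintro ⟨j, hj⟩ ⟨k, hk⟩
      rcases lt_trichotomy j k with h | h | h
      · exact Or.inr (hH.2 j k hj hk h)
      · subst h; exact Or.inl (substar_refl _)
      · exact Or.inl (hH.2 k j hk hj h))
  -- the countable set A
  have hAc : (AsetOf i prev).Countable := by
    apply Set.Countable.union finSupp_countable
    have : {x | ∃ (j : kappa) (hj : j < i), prev j hj = x} =
        Set.range (fun p : {j : kappa // j < i} => prev p.1 p.2) := by
      ext x
      constructor
      · rintro ⟨j, hj, rfl⟩; exact ⟨⟨j, hj⟩, rfl⟩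
      · rintro ⟨⟨j, hj⟩, rfl⟩; exact ⟨j, hj, rfl⟩
    rw [this]
    exact Set.countable_range _
  have hAne : (AsetOf i prev).Nonempty := ⟨fun _ => false, Or.inl (by simp [FinSupp, xset])⟩
  obtain ⟨enumA, henumA⟩ := hAc.exists_eq_range hAne
  have hFinA : FinSupp ⊆ Set.range enumA := by rw [← henumA]; exact Set.subset_union_left
  -- the covers to use
  set u : ℕ → Set (Set CB) := fun j =>
    if Suitable (S i) (AsetOf i prev) then S i j else BasicNE with hu
  have hub : ∀ j, u j ⊆ BasicNE := by
    intro j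
    simp only [hu]
    split
    · next hs => exact hs.1 j
    · exact Set.Subset.rfl
  have hucov : ∀ (j : ℕ) (F : Set CB), F.Finite → F ⊆ Set.range enumA → ∃ C ∈ u j, F ⊆ C := by
    intro j F hF hFA
    simp only [hu]
    split
    · next hs => exact hs.2 j F hF (henumA ▸ hFA)
    · exact basicNE_cover hF
  obtain ⟨b, m, V, hmono, hgle, hain, hxb, hVmem, hVinj, hevA, hevS⟩ :=
    keyLemma u hub enumA hFinA hucov a ha (gg i)
  refine ⟨b, fun _ => ?_⟩
  refine ⟨?_, ?_, ⟨m, hmono, hxb, hgle⟩, ?_⟩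
  · rw [hxb]; exact Set.infinite_range_of_injective hmono.injective
  · intro j hj
    refine substar_of_subset ?_ (hsub ⟨j, hj⟩)
    rw [hxb]
    rintro n ⟨k, rfl⟩
    exact hain k
  · intro hs
    have hueq : ∀ j, u j = S i j := by intro j; simp only [hu, if_pos hs]
    refine ⟨V, fun j => (hueq j) ▸ hVmem j, hVinj, ?_⟩
    rintro y (hy | hy)
    · exact hevA y (henumA ▸ hy)
    · exact hevS y hy

/-- the transfinite sequence -/
def bFun : kappa → CB :=
  (IsWellFounded.wf (r := ((· < ·) : kappa → kappa → Prop))).fix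
    (fun i IH => Classical.choose (stageEx S gg i IH))

lemma bFun_eq (i : kappa) :
    bFun S gg i = Classical.choose (stageEx S gg i (fun j _ => bFun S gg j)) := by
  exact WellFounded.fix_eq _ _ i

lemma bGood : ∀ i : kappa, GoodOf S gg i (fun j _ => bFun S gg j) (bFun S gg i) := by
  intro i
  induction i using WellFounded.induction (IsWellFounded.wf (r := ((· < ·) : kappa → kappa → Prop))) with
  | _ i IH =>
    have hH : HypOf i (fun j _ => bFun S gg j) := by
      constructor
      · intro j hj
        exact (IH j hj).1
      · intro j k hj hk hjk
        exact (IH k hk).2.1 j hjk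
    have := Classical.choose_spec (stageEx S gg i (fun j _ => bFun S gg j)) hH
    rwa [← bFun_eq] at this

/-- the γ-set -/
def X0 : Set CB := FinSupp ∪ Set.range (bFun S gg)

end Tower

section Props
open Cardinal

variable (S : kappa → ℕ → Set (Set CB)) (gg : kappa → ℕ → ℕ)

/-- extraction of finite index sets -/
lemma finset_of_subset_range {β : Type*} {f : ℕ → β} {s : Set β} (hs : s.Finite)
    (h : s ⊆ Set.range f) : ∃ K : Finset ℕ, s ⊆ f '' ↑K := by
  refine Set.Finite.induction_on (motive := fun s _ => s ⊆ Set.range f → ∃ K : Finset ℕ, s ⊆ f '' ↑K)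
    s hs (fun _ => ⟨∅, by simp⟩) ?_ h
  intro a s _ _ IH hins
  obtain ⟨K, hK⟩ := IH (fun x hx => hins (Set.mem_insert_iff.2 (Or.inr hx)))
  obtain ⟨k, hk⟩ := hins (Set.mem_insert a s)
  refine ⟨insert k K, ?_⟩
  rintro x (rfl | hx)
  · exact ⟨k, by simp, hk⟩
  · obtain ⟨k', hk', hfk'⟩ := hK hx
    exact ⟨k', by simp [hk'], hfk'⟩

def UU (n k : ℕ) : Set CB := {x | n < ((Finset.range k).filter (fun j => x j = true)).card}

lemma UU_det (n k : ℕ) : Determined (UU n k) k := by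
  intro x y hxy
  have : (Finset.range k).filter (fun j => x j = true) =
      (Finset.range k).filter (fun j => y j = true) := by
    apply Finset.filter_congr
    intro j hj
    rw [hxy j (Finset.mem_range.1 hj)]
  simp only [UU, Set.mem_setOf_eq, this]

lemma UU_mono {n k k' : ℕ} (h : k ≤ k') : UU n k ⊆ UU n k' := by
  intro x hx
  refine lt_of_lt_of_le hx (Finset.card_le_card ?_)
  intro j hj
  simp only [Finset.mem_filter, Finset.mem_range] at hj ⊢
  exact ⟨lt_of_lt_of_le hj.1 h, hj.2⟩

lemma UU_exists {x : CB} (hx : (xset x).Infinite) (n : ℕ) : ∃ k, x ∈ UU n k := by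
  obtain ⟨t, hts, htc⟩ := hx.exists_subset_card_eq (n + 1)
  refine ⟨t.sup id + 1, ?_⟩
  have hsub : t ⊆ (Finset.range (t.sup id + 1)).filter (fun j => x j = true) := by
    intro j hj
    simp only [Finset.mem_filter, Finset.mem_range]
    exact ⟨Nat.lt_succ_of_le (Finset.le_sup (f := id) hj), hts hj⟩
  have := Finset.card_le_card hsub
  simp only [UU, Set.mem_setOf_eq]
  omega

lemma escape_UU {i : kappa} {g : ℕ → ℕ} (hgi : gg i = g) {n k : ℕ} (hk : k ≤ g n) :
    bFun S gg i ∉ UU n k := by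
  obtain ⟨m, hmono, hxeq, hge⟩ := (bGood S gg i).2.2.1
  intro hmem
  simp only [UU, Set.mem_setOf_eq] at hmem
  have hsub : (Finset.range k).filter (fun j => bFun S gg i j = true) ⊆
      (Finset.range n).image m := by
    intro j hj
    simp only [Finset.mem_filter, Finset.mem_range] at hj
    have hj2 : j ∈ xset (bFun S gg i) := hj.2
    rw [hxeq] at hj2
    obtain ⟨t, rfl⟩ := hj2
    have htn : t < n := by
      by_contra hc
      push_neg at hc
      have h1 : m n ≤ m t := hmono.monotone hc
      have h2 : g n ≤ m n := by rw [← hgi]; exact hge n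
      omega
    exact Finset.mem_image_of_mem m (Finset.mem_range.2 htn)
  have h3 := Finset.card_le_card hsub
  have h4 := Finset.card_image_le (f := m) (s := Finset.range n)
  simp only [Finset.card_range] at h4
  omega

lemma bFun_not_finSupp (i : kappa) : bFun S gg i ∉ FinSupp :=
  fun h => (bGood S gg i).1 h

lemma not_ufin (hggsurj : Function.Surjective gg) :
    ¬ UfinOO ↥(Set.range (bFun S gg)) := by
  intro hU
  set T : Set CB := Set.range (bFun S gg) with hT
  have hTne : Nonempty ↥T := ⟨⟨bFun S gg (Classical.arbitrary kappa), ⟨_, rfl⟩⟩⟩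
  set 𝒞 : ℕ → Set (Set ↥T) := fun n =>
    Set.range (fun k => (Subtype.val ⁻¹' (UU n k) : Set ↥T)) with h𝒞
  have hopen : ∀ n, IsOpenCover (𝒞 n) := by
    intro n
    constructor
    · rintro U ⟨k, rfl⟩
      exact (determined_isOpen (UU_det n k)).preimage continuous_subtype_val
    · ext ⟨x, hx⟩
      simp only [Set.mem_sUnion, Set.mem_univ, iff_true]
      obtain ⟨i, rfl⟩ := hx
      obtain ⟨k, hk⟩ := UU_exists ((bGood S gg i).1) n
      exact ⟨_, ⟨k, rfl⟩, hk⟩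
  have hnofin : ∀ n, ¬ HasFinSubcover (𝒞 n) := by
    rintro n ⟨ℱ, hsub, hfin, huniv⟩
    obtain ⟨K, hK⟩ := finset_of_subset_range hfin hsub
    obtain ⟨i, hi⟩ := hggsurj (fun _ => K.sup id + 1)
    have hxT : bFun S gg i ∈ T := ⟨i, rfl⟩
    have : (⟨bFun S gg i, hxT⟩ : ↥T) ∈ ⋃₀ ℱ := huniv ▸ Set.mem_univ _
    obtain ⟨P, hP, hxP⟩ := this
    obtain ⟨k, hkK, rfl⟩ := hK hP
    exact escape_UU S gg hi (Nat.lt_succ_of_le (Finset.le_sup (f := id) hkK)).le hxP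
  obtain ⟨ℱ, hℱ, hcov⟩ := hU 𝒞 hopen hnofin
  have hKex : ∀ n, ∃ K : Finset ℕ, ℱ n ⊆ (fun k => (Subtype.val ⁻¹' (UU n k) : Set ↥T)) '' ↑K :=
    fun n => finset_of_subset_range (hℱ n).2 (hℱ n).1
  set K := fun n => (hKex n).choose with hKdef
  obtain ⟨i, hi⟩ := hggsurj (fun n => (K n).sup id + 1)
  have hxT : bFun S gg i ∈ T := ⟨i, rfl⟩
  have : (⟨bFun S gg i, hxT⟩ : ↥T) ∈ ⋃ n, ⋃₀ ℱ n := hcov ▸ Set.mem_univ _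
  obtain ⟨W, ⟨n, rfl⟩, hW⟩ := this
  obtain ⟨P, hP, hxP⟩ := hW
  obtain ⟨k, hkK, rfl⟩ := (hKex n).choose_spec hP
  exact escape_UU S gg hi (Nat.lt_succ_of_le (Finset.le_sup (f := id) hkK)).le hxP

end Props

section S1Part

variable (S : kappa → ℕ → Set (Set CB)) (gg : kappa → ℕ → ℕ)

lemma s1_X0
    (hSsurj : ∀ u : ℕ → Set (Set CB), (∀ j, u j ⊆ BasicNE) → ∃ i, S i = u) :
    S1OmegaGamma ↥(X0 S gg) := by
  classical
  intro 𝒰 h𝒰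
  -- refined clopen covers
  set 𝒰' : ℕ → Set (Set CB) := fun n =>
    {C | C ∈ BasicNE ∧ ∃ U ∈ 𝒰 n, (Subtype.val ⁻¹' C : Set ↥(X0 S gg)) ⊆ U} with h𝒰'
  have h𝒰'B : ∀ n, 𝒰' n ⊆ BasicNE := fun n C hC => hC.1
  have hcov' : ∀ (n : ℕ) (F : Set CB), F.Finite → F ⊆ X0 S gg → ∃ C ∈ 𝒰' n, F ⊆ C := by
    intro n F hF hFX
    set Fsub : Set ↥(X0 S gg) := Subtype.val ⁻¹' F with hFsub
    have hFsubfin : Fsub.Finite := hF.preimage (Subtype.val_injective.injOn)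
    obtain ⟨U, hU, hFU⟩ := (h𝒰 n).2.2.2 Fsub hFsubfin
    obtain ⟨W, hW, hWU⟩ := isOpen_induced_iff.1 ((h𝒰 n).1 U hU)
    have hFW : ∀ x ∈ F, x ∈ W := by
      intro x hx
      have : (⟨x, hFX hx⟩ : ↥(X0 S gg)) ∈ Fsub := hx
      have := hFU this
      rw [← hWU] at this
      exact this
    have hm : ∀ x ∈ F, ∃ m : ℕ, ∀ y : CB, (∀ k < m, y k = x k) → y ∈ W :=
      fun x hx => exists_determined_nbhd hW (hFW x hx)
    set mfn : CB → ℕ := fun x => if h : x ∈ F then (hm x h).choose else 0 with hmfn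
    obtain ⟨m₀, hm₀⟩ : ∃ m₀, ∀ x ∈ F, mfn x ≤ m₀ := by
      obtain ⟨m₀, hm₀⟩ := (hF.image mfn).bddAbove
      exact ⟨m₀, fun x hx => hm₀ (Set.mem_image_of_mem mfn hx)⟩
    set C : Set CB := {y | ∃ x ∈ F, ∀ k < mfn x, y k = x k} with hC
    have hCW : C ⊆ W := by
      rintro y ⟨x, hx, hy⟩
      refine (hm x hx).choose_spec y ?_
      intro k hk
      apply hy
      simpa only [hmfn, dif_pos hx] using hk
    have hdet : Determined C m₀ := by
      intro y y' hyy'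
      constructor
      · rintro ⟨x, hx, hy⟩
        exact ⟨x, hx, fun k hk => (hyy' k (lt_of_lt_of_le hk (hm₀ x hx))).symm.trans (hy k hk)⟩
      · rintro ⟨x, hx, hy⟩
        exact ⟨x, hx, fun k hk => (hyy' k (lt_of_lt_of_le hk (hm₀ x hx))).trans (hy k hk)⟩
    have hCne : C ≠ Set.univ := by
      obtain ⟨z, hz⟩ := Set.ne_univ_iff_exists_notMem U |>.1 ((h𝒰 n).2.2.1 U hU)
      intro hCu
      apply hz
      have hzC : (z : CB) ∈ C := hCu ▸ Set.mem_univ _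
      have : (z : CB) ∈ W := hCW hzC
      rw [← hWU]
      exact this
    refine ⟨C, ⟨⟨⟨m₀, hdet⟩, hCne⟩, ⟨U, hU, ?_⟩⟩, ?_⟩
    · intro y hy
      rw [← hWU]
      exact hCW hy
    · intro x hx
      exact ⟨x, hx, fun k _ => rfl⟩
  -- find the stage
  obtain ⟨i₀, hi₀⟩ := hSsurj 𝒰' h𝒰'B
  have hAsub : AsetOf i₀ (fun j _ => bFun S gg j) ⊆ X0 S gg := by
    rintro x (hx | ⟨j, hj, rfl⟩)
    · exact Or.inl hx
    · exact Or.inr ⟨j, rfl⟩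
  have hsuit : Suitable (S i₀) (AsetOf i₀ (fun j _ => bFun S gg j)) := by
    constructor
    · intro j
      rw [hi₀]
      exact h𝒰'B j
    · intro j F hF hFA
      rw [hi₀]
      exact hcov' j F hF (hFA.trans hAsub)
  obtain ⟨V, hVmem, hVinj, hVev⟩ := (bGood S gg i₀).2.2.2 hsuit
  have hall : ∀ y : CB, y ∈ X0 S gg → ∀ᶠ j in atTop, y ∈ V j := by
    rintro y (hy | ⟨j, rfl⟩)
    · exact hVev y (Or.inl (Or.inl hy))
    · rcases lt_trichotomy j i₀ with h | h | h
      · exact hVev _ (Or.inl (Or.inr ⟨j, h, rfl⟩))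
      · subst h
        exact hVev _ (Or.inr (substar_refl _))
      · exact hVev _ (Or.inr ((bGood S gg j).2.1 i₀ h))
  -- selection from the original covers
  have hVsel : ∀ n, ∃ U ∈ 𝒰 n, (Subtype.val ⁻¹' (V n) : Set ↥(X0 S gg)) ⊆ U := by
    intro n
    have := hVmem n
    rw [hi₀] at this
    exact this.2
  set Usel : ℕ → Set ↥(X0 S gg) := fun n => (hVsel n).choose with hUsel
  have hUmem : ∀ n, Usel n ∈ 𝒰 n := fun n => (hVsel n).choose_spec.1
  have hUsub : ∀ n, (Subtype.val ⁻¹' (V n) : Set ↥(X0 S gg)) ⊆ Usel n :=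
    fun n => (hVsel n).choose_spec.2
  have hev : ∀ y : ↥(X0 S gg), ∀ᶠ n in atTop, y ∈ Usel n := by
    intro y
    filter_upwards [hall y.1 y.2] with n hn
    exact hUsub n hn
  refine ⟨Usel, hUmem, ?_, ?_, ?_⟩
  · -- infinite range
    intro hfin
    have hne : ∀ W ∈ Set.range Usel, ∃ z : ↥(X0 S gg), z ∉ W := by
      rintro W ⟨n, rfl⟩
      exact Set.ne_univ_iff_exists_notMem _ |>.1 ((h𝒰 n).2.2.1 _ (hUmem n))
    set zf : Set ↥(X0 S gg) → ↥(X0 S gg) := fun W =>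
      if h : ∃ z : ↥(X0 S gg), z ∉ W then h.choose else
        ⟨fun _ => false, Or.inl (by simp [FinSupp, xset])⟩
      with hzf
    have hzf1 : ∀ W ∈ Set.range Usel, zf W ∉ W := by
      intro W hW
      rw [hzf]
      simp only [dif_pos (hne W hW)]
      exact (hne W hW).choose_spec
    have hevall : ∀ᶠ n in atTop, ∀ W ∈ Set.range Usel, zf W ∈ Usel n := by
      rw [Filter.eventually_all_finite hfin]
      intro W _
      exact hev (zf W)
    obtain ⟨n, hn⟩ := hevall.exists
    exact hzf1 (Usel n) ⟨n, rfl⟩ (hn (Usel n) ⟨n, rfl⟩)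
  · -- covers
    ext y
    simp only [Set.mem_sUnion, Set.mem_univ, iff_true]
    obtain ⟨n, hn⟩ := (hev y).exists
    exact ⟨Usel n, ⟨n, rfl⟩, hn⟩
  · -- γ-property
    intro y
    obtain ⟨N, hN⟩ := Filter.eventually_atTop.1 (hev y)
    have hsub : {W | W ∈ Set.range Usel ∧ y ∉ W} ⊆ Usel '' (Set.Iio N) := by
      rintro W ⟨⟨n, rfl⟩, hyW⟩
      refine ⟨n, ?_, rfl⟩
      by_contra h
      simp only [Set.mem_Iio, not_lt] at h
      exact hyW (hN n h)
    exact ((Set.finite_Iio N).image Usel).subset hsub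

end S1Part

section Transfer

variable {α β : Type*} [TopologicalSpace α] [TopologicalSpace β]

lemma s1_of_homeomorph (e : α ≃ₜ β) (h : S1OmegaGamma α) : S1OmegaGamma β := by
  intro 𝒱 h𝒱
  set 𝒰 : ℕ → Set (Set α) := fun n => (fun V => e ⁻¹' V) '' (𝒱 n) with h𝒰
  have hpreinj : Function.Injective (fun V : Set β => e ⁻¹' V) :=
    Set.preimage_injective.mpr e.surjective
  have h𝒰' : ∀ n, IsOpenOmegaCover (𝒰 n) := by
    intro n
    obtain ⟨hop, hcov, hne, hfin⟩ := h𝒱 n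
    refine ⟨?_, ?_, ?_, ?_⟩
    · rintro U ⟨V, hV, rfl⟩
      exact (hop V hV).preimage e.continuous
    · ext x
      simp only [Set.mem_univ, iff_true]
      have : e x ∈ ⋃₀ 𝒱 n := hcov ▸ Set.mem_univ _
      obtain ⟨V, hV, hxV⟩ := this
      exact ⟨e ⁻¹' V, ⟨V, hV, rfl⟩, hxV⟩
    · rintro U ⟨V, hV, rfl⟩ hUuniv
      apply hne V hV
      rw [Set.eq_univ_iff_forall]
      intro y
      have h1 : e.symm y ∈ (fun V => e ⁻¹' V) V := hUuniv ▸ Set.mem_univ (e.symm y)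
      simpa using h1
    · intro F hF
      obtain ⟨V, hV, hFV⟩ := hfin (e '' F) (hF.image e)
      refine ⟨e ⁻¹' V, ⟨V, hV, rfl⟩, ?_⟩
      intro x hx
      exact hFV (Set.mem_image_of_mem e hx)
  obtain ⟨U, hUmem, hUinf, hUcov, hUgam⟩ := h 𝒰 h𝒰'
  have hVex : ∀ n, ∃ V ∈ 𝒱 n, e ⁻¹' V = U n := fun n => hUmem n
  set Vsel : ℕ → Set β := fun n => (hVex n).choose with hVsel
  have hVmem : ∀ n, Vsel n ∈ 𝒱 n := fun n => (hVex n).choose_spec.1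
  have hVeq : ∀ n, e ⁻¹' (Vsel n) = U n := fun n => (hVex n).choose_spec.2
  have hrange : Set.range U = (fun V => e ⁻¹' V) '' Set.range Vsel := by
    ext W
    constructor
    · rintro ⟨n, rfl⟩; exact ⟨Vsel n, ⟨n, rfl⟩, hVeq n⟩
    · rintro ⟨V, ⟨n, rfl⟩, rfl⟩; exact ⟨n, (hVeq n).symm⟩
  refine ⟨Vsel, hVmem, ?_, ?_, ?_⟩
  · intro hfin
    exact hUinf (hrange ▸ hfin.image _)
  · ext y
    simp only [Set.mem_univ, iff_true]
    have : e.symm y ∈ ⋃₀ Set.range U := hUcov ▸ Set.mem_univ _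
    obtain ⟨W, ⟨n, rfl⟩, hyW⟩ := this
    refine ⟨Vsel n, ⟨n, rfl⟩, ?_⟩
    rw [← hVeq n] at hyW
    simpa using hyW
  · intro y
    have hfin := hUgam (e.symm y)
    have hsub : (fun V => e ⁻¹' V) '' {V | V ∈ Set.range Vsel ∧ y ∉ V} ⊆
        {W | W ∈ Set.range U ∧ e.symm y ∉ W} := by
      rintro W ⟨V, ⟨⟨n, rfl⟩, hyV⟩, rfl⟩
      refine ⟨⟨n, (hVeq n).symm⟩, ?_⟩
      intro hc
      apply hyV
      have := hc
      simp only [Set.mem_preimage] at this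
      simpa using this
    have himg : ((fun V => e ⁻¹' V) '' {V | V ∈ Set.range Vsel ∧ y ∉ V}).Finite :=
      hfin.subset hsub
    exact Set.Finite.of_finite_image himg (hpreinj.injOn)

lemma ufin_of_homeomorph (e : α ≃ₜ β) (h : UfinOO α) : UfinOO β := by
  intro 𝒱 hop hnofin
  set 𝒰 : ℕ → Set (Set α) := fun n => (fun V => e ⁻¹' V) '' (𝒱 n) with h𝒰
  have hpreinj : Function.Injective (fun V : Set β => e ⁻¹' V) :=
    Set.preimage_injective.mpr e.surjective
  have hop' : ∀ n, IsOpenCover (𝒰 n) := by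
    intro n
    refine ⟨?_, ?_⟩
    · rintro U ⟨V, hV, rfl⟩
      exact ((hop n).1 V hV).preimage e.continuous
    · ext x
      simp only [Set.mem_univ, iff_true]
      have : e x ∈ ⋃₀ 𝒱 n := (hop n).2 ▸ Set.mem_univ _
      obtain ⟨V, hV, hxV⟩ := this
      exact ⟨e ⁻¹' V, ⟨V, hV, rfl⟩, hxV⟩
  have hnofin' : ∀ n, ¬ HasFinSubcover (𝒰 n) := by
    rintro n ⟨ℱ, hsub, hfin, huniv⟩
    apply hnofin n
    refine ⟨{V | V ∈ 𝒱 n ∧ e ⁻¹' V ∈ ℱ}, fun V hV => hV.1, ?_, ?_⟩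
    · have : (fun V : Set β => e ⁻¹' V) '' {V | V ∈ 𝒱 n ∧ e ⁻¹' V ∈ ℱ} ⊆ ℱ := by
        rintro W ⟨V, hV, rfl⟩
        exact hV.2
      exact (hfin.subset this).of_finite_image (hpreinj.injOn)
    · ext y
      simp only [Set.mem_univ, iff_true]
      have : e.symm y ∈ ⋃₀ ℱ := huniv ▸ Set.mem_univ _
      obtain ⟨P, hP, hyP⟩ := this
      obtain ⟨V, hV, rfl⟩ := hsub hP
      refine ⟨V, ⟨hV, hP⟩, ?_⟩
      simpa using hyP
  obtain ⟨ℱ, hℱ, hcov⟩ := h 𝒰 hop' hnofin'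
  refine ⟨fun n => {V | V ∈ 𝒱 n ∧ e ⁻¹' V ∈ ℱ n}, ?_, ?_⟩
  · intro n
    refine ⟨fun V hV => hV.1, ?_⟩
    have : (fun V : Set β => e ⁻¹' V) '' {V | V ∈ 𝒱 n ∧ e ⁻¹' V ∈ ℱ n} ⊆ ℱ n := by
      rintro W ⟨V, hV, rfl⟩
      exact hV.2
    exact (((hℱ n).2).subset this).of_finite_image (hpreinj.injOn)
  · ext y
    simp only [Set.mem_univ, iff_true, Set.mem_iUnion]
    have : e.symm y ∈ ⋃ n, ⋃₀ ℱ n := hcov ▸ Set.mem_univ _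
    obtain ⟨s, ⟨n, rfl⟩, hs⟩ := this
    obtain ⟨P, hP, hyP⟩ := hs
    obtain ⟨V, hV, rfl⟩ := (hℱ n).1 hP
    refine ⟨n, V, ⟨hV, hP⟩, ?_⟩
    simpa using hyP

end Transfer

section Cantor

/-- the Cantor embedding into ℝ -/
noncomputable def cmap : CB → ℝ := Cardinal.cantorFunction (1/3)

lemma cmap_continuous : Continuous cmap := by
  apply continuous_tsum (u := fun n => (1/3 : ℝ) ^ n)
  · intro n
    have h1 : Continuous fun x : CB => x n := continuous_apply n
    exact (continuous_of_discreteTopology (α := Bool)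
      (f := fun b : Bool => (cond b ((1/3 : ℝ)^n) 0))).comp h1
  · exact summable_geometric_of_lt_one (by norm_num) (by norm_num)
  · intro n x
    cases h : x n
    · have h2 : Cardinal.cantorFunctionAux (1/3) x n = 0 := Cardinal.cantorFunctionAux_false h
      rw [h2, norm_zero]
      positivity
    · have h2 : Cardinal.cantorFunctionAux (1/3) x n = (1/3 : ℝ)^n := Cardinal.cantorFunctionAux_true h
      rw [h2, Real.norm_eq_abs, abs_of_nonneg (by positivity)]

lemma cmap_injective : Function.Injective cmap :=
  Cardinal.cantorFunction_injective (by norm_num) (by norm_num)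

lemma cmap_embedding : Topology.IsEmbedding cmap :=
  (cmap_continuous.isClosedEmbedding cmap_injective).toIsEmbedding

/-- homeomorphism between a subset of Cantor space and its image in ℝ -/
noncomputable def cmapHomeo (s : Set CB) : ↥s ≃ₜ ↥(cmap '' s) :=
  (Topology.IsEmbedding.toHomeomorph (cmap_embedding.comp Topology.IsEmbedding.subtypeVal)).trans
    (Homeomorph.setCongr (by rw [Set.range_comp, Subtype.range_coe]))

end Cantor

end GammaAux

/-- Under CH there is a set of reals satisfying `S1(Ω,Γ)` with a countable subset whose
removal destroys even the Menger property; in particular, none of the properties between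
`S1(Ω,Γ)` and `Ufin(O,O)` is hereditary. -/
theorem s1OmegaGamma_not_hereditary
    (hCH : (2 : Cardinal) ^ Cardinal.aleph0 = Cardinal.aleph 1) :
    ∃ (X Q : Set ℝ), Q ⊆ X ∧ Q.Countable ∧ S1OmegaGamma X ∧
      ¬ UfinOO (X \ Q : Set ℝ) := by
  obtain ⟨gg, hgg⟩ := exists_surj_g (hch_zero hCH)
  obtain ⟨S, hS⟩ := exists_surj_S (hch_zero hCH)
  refine ⟨cmap '' (X0 S gg), cmap '' FinSupp, Set.image_mono Set.subset_union_left,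
    finSupp_countable.image _, ?_, ?_⟩
  · exact s1_of_homeomorph (cmapHomeo (X0 S gg)) (s1_X0 S gg hS)
  · have hdiff : cmap '' (X0 S gg) \ cmap '' FinSupp = cmap '' (Set.range (bFun S gg)) := by
      have hre : X0 S gg \ FinSupp = Set.range (bFun S gg) := by
        ext x
        constructor
        · rintro ⟨hx | hx, hnf⟩
          · exact absurd hx hnf
          · exact hx
        · rintro ⟨i, rfl⟩
          exact ⟨Or.inr ⟨i, rfl⟩, bFun_not_finSupp S gg i⟩
      rw [← Set.image_diff cmap_injective, hre]
    intro hU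
    have e1 : ↥(cmap '' (X0 S gg) \ cmap '' FinSupp) ≃ₜ ↥(cmap '' (Set.range (bFun S gg))) :=
      Homeomorph.setCongr hdiff
    have e2 : ↥(Set.range (bFun S gg)) ≃ₜ ↥(cmap '' (Set.range (bFun S gg))) :=
      cmapHomeo _
    exact not_ufin S gg hgg (ufin_of_homeomorph (e1.trans e2.symm) hU)
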